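/- Let n ∈ ℕ and set t_j = −n + 2j for j = 0, …, n. For every c = (c₀, …, c_n) ∈ ℂ^{n+1} there is a unique a = (a₀, …, a_n) ∈ ℂ^{n+1} with Σ_{q=0}^{n} a_q t_j^q = c_j for all j, and it satisfies |a_q| ≤ (n+1)·C(n,q)·max_{0≤j≤n} |c_j| for every q = 0, …, n, where C(n,q) is the binomial coefficient. (Equivalently, each entry of the inverse of the Vandermonde matrix with equispaced nodes t_j = −n+2j is bounded in absolute value by the corresponding binomial coefficient C(n,q).) -/

import Mathlib

noncomputable section
open MeasureTheory Complex Matrix Polynomial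
open scoped BigOperators ComplexConjugate

attribute [local instance] Matrix.frobeniusNormedAddCommGroup Matrix.frobeniusNormedSpace

/-- `ℂ²` with its Euclidean (Hermitian) norm. -/
abbrev C2 : Type := EuclideanSpace ℂ (Fin 2)

instance : MeasureSpace C2 :=
  { toMeasurableSpace := inferInstance
    volume := (volume : Measure (Fin 2 → ℂ)).map (MeasurableEquiv.toLp 2 (Fin 2 → ℂ)) }
instance : BorelSpace C2 := inferInstance

/-- `End(V_n)`, identified with `(n+1)×(n+1)` complex matrices. -/
abbrev MatN (n : ℕ) : Type := Matrix (Fin (n+1)) (Fin (n+1)) ℂ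

/-- The unitary group `U(2)`. -/
abbrev U2 : Type := Matrix.unitaryGroup (Fin 2) ℂ

/-- The natural action of a `2×2` matrix on `ℂ²`. -/
def act (m : Matrix (Fin 2) (Fin 2) ℂ) (z : C2) : C2 :=
  WithLp.toLp 2 (fun i => Matrix.mulVec m (fun a => z a) i)

/-- The matrix of the representation `τ_n` in the orthonormal basis
`e_j = C(n,j)^{1/2} z₁^j z₂^{n-j}` of `V_n`: the `(i,j)` entry is the coefficient of `e_i`
in `τ_n(k) e_j`, where `(τ_n(k)p)(z) = p(k⁻¹ z)`. -/
def tauM (n : ℕ) (k : Matrix (Fin 2) (Fin 2) ℂ) : MatN n :=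
  Matrix.of fun i j =>
    ((Real.sqrt (n.choose j) / Real.sqrt (n.choose i) : ℝ) : ℂ) *
      ∑ s ∈ Finset.range ((j : ℕ) + 1), ∑ t ∈ Finset.range (n - (j : ℕ) + 1),
        if s + t = (i : ℕ) then
          ((j : ℕ).choose s : ℂ) * ((n - (j : ℕ)).choose t : ℂ) *
            (k⁻¹ 0 0) ^ s * (k⁻¹ 0 1) ^ ((j : ℕ) - s) *
            (k⁻¹ 1 0) ^ t * (k⁻¹ 1 1) ^ (n - (j : ℕ) - t)
        else 0

/-- `τ_n` on `U(2)`. -/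
def tau (n : ℕ) (k : U2) : MatN n := tauM n (k : Matrix (Fin 2) (Fin 2) ℂ)

/-- `K`-equivariance of an `End(V_n)`-valued function on `ℂ²`:
`F(kz) = τ_n(k) F(z) τ_n(k)⁻¹`. -/
def KEquivariant (n : ℕ) (F : C2 → MatN n) : Prop :=
  ∀ (k : U2) (z : C2), F (act (k : Matrix (Fin 2) (Fin 2) ℂ) z) = tau n k * F z * (tau n k)⁻¹

/-- For `|z| = 1`, the element `k_z ∈ SU(2)` with rows `(conj z₂, z₁)`, `(−conj z₁, z₂)`. -/
def kmat (z : C2) : Matrix (Fin 2) (Fin 2) ℂ :=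
  !![conj (z 1), z 0; -conj (z 0), z 1]

/-- `Q_B^d(z) = |z|^{2d} τ_n(k_{z/|z|}) B τ_n(k_{z/|z|})*` (for `z ≠ 0`). -/
def Q (n : ℕ) (B : MatN n) (d : ℕ) (z : C2) : MatN n :=
  (‖z‖ ^ (2 * d)) • (tauM n (kmat (‖z‖⁻¹ • z)) * B * (tauM n (kmat (‖z‖⁻¹ • z)))ᴴ)

open Classical in
/-- `Q_B^d` extended by (the value of its) continuity (extension, when it exists) at `0`. -/
def Qext (n : ℕ) (B : MatN n) (d : ℕ) (z : C2) : MatN n :=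
  if z = 0 then (if d = 0 then B else 0) else Q n B d z

/-- The basis element `X₁ = [[i,0],[0,−i]]` of `su(2)`. -/
def X1 : Matrix (Fin 2) (Fin 2) ℂ := !![Complex.I, 0; 0, -Complex.I]

/-- The basis element `X₂ = [[0,1],[−1,0]]` of `su(2)`. -/
def X2 : Matrix (Fin 2) (Fin 2) ℂ := !![0, 1; -1, 0]

/-- The basis element `X₃ = [[0,i],[i,0]]` of `su(2)`. -/
def X3 : Matrix (Fin 2) (Fin 2) ℂ := !![0, Complex.I; Complex.I, 0]

/-- `dτ_n(X) = (d/dt)|_{t=0} τ_n(exp(tX))`, computed entrywise. -/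
def dtau (n : ℕ) (X : Matrix (Fin 2) (Fin 2) ℂ) : MatN n :=
  Matrix.of fun i j =>
    deriv (fun t : ℝ => tauM n (NormedSpace.exp ((t : ℂ) • X)) i j) 0

/-- `B_n^1 = i·dτ_n(X₁) = diag(−n, −n+2, …, n)`. -/
def B1 (n : ℕ) : MatN n := Matrix.diagonal fun j => (-(n : ℂ) + 2 * (j : ℕ))

/-- `C̃(A) = −Σ_{i=1}^{3} [dτ_n(X_i), [dτ_n(X_i), A]]`. -/
def Ctilde (n : ℕ) (A : MatN n) : MatN n :=
  - ((dtau n X1 * (dtau n X1 * A - A * dtau n X1) - (dtau n X1 * A - A * dtau n X1) * dtau n X1)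
   + (dtau n X2 * (dtau n X2 * A - A * dtau n X2) - (dtau n X2 * A - A * dtau n X2) * dtau n X2)
   + (dtau n X3 * (dtau n X3 * A - A * dtau n X3) - (dtau n X3 * A - A * dtau n X3) * dtau n X3))

/-- Membership in `W_n^ℓ`, the eigenspace of `C̃` with eigenvalue `4ℓ(ℓ+1)`. -/
def Wmem (n ℓ : ℕ) (A : MatN n) : Prop :=
  Ctilde n A = (4 * (ℓ : ℂ) * ((ℓ : ℂ) + 1)) • A

/-- `q` is the monic polynomial `q_n^ℓ` of degree `ℓ` with `q(B_n^1) ∈ W_n^ℓ`. -/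
def IsQpoly (n ℓ : ℕ) (q : Polynomial ℂ) : Prop :=
  q.Monic ∧ q.natDegree = ℓ ∧ Wmem n ℓ (Polynomial.aeval (B1 n) q)

/-- A matrix-valued map each of whose entries is a polynomial in `z₁, z₂, conj z₁, conj z₂`. -/
def IsPolyMap (n : ℕ) (F : C2 → MatN n) : Prop :=
  ∀ i j, ∃ P : MvPolynomial (Fin 4) ℂ,
    ∀ z : C2, F z i j = MvPolynomial.eval ![z 0, z 1, conj (z 0), conj (z 1)] P

/-- The Euclidean Laplacian of `ℝ⁴ ≅ ℂ²`, applied to a vector-valued function. -/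
def lapl {W : Type*} [NormedAddCommGroup W] [NormedSpace ℝ W] (f : C2 → W) (z : C2) : W :=
  ∑ i : Fin 2,
    (iteratedDeriv 2 (fun t : ℝ => f (z + t • EuclideanSpace.single i (1 : ℂ))) 0
      + iteratedDeriv 2 (fun t : ℝ => f (z + t • EuclideanSpace.single i Complex.I)) 0)

/-- `⟨z,ζ⟩ = Re(z₁ conj ζ₁ + z₂ conj ζ₂)`. -/
def pairing (z ζ : C2) : ℝ := (∑ i, z i * conj (ζ i)).re

/-- The (entrywise) Fourier transform `F̂(ζ) = ∫_{ℂ²} F(z) e^{-i⟨z,ζ⟩} dz`. -/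
def FT (n : ℕ) (F : C2 → MatN n) (ζ : C2) : MatN n :=
  Matrix.of fun i j =>
    ∫ z : C2, F z i j * Complex.exp (-Complex.I * (pairing z ζ : ℝ))

/-- The base point `b = (0,1) ∈ ℂ²`. -/
def bvec : C2 := EuclideanSpace.single 1 1

/-- The normalized surface measure of the unit sphere `S³ ⊂ ℂ²`. -/
def sigmaS : Measure (Metric.sphere (0 : C2) 1) :=
  ((volume : Measure C2).toSphere Set.univ)⁻¹ • (volume : Measure C2).toSphere

/-- The `End(V_n)`-valued spherical function
`Φ_{ξ,j}(z) = (n+1) ∫_{S³} e^{-i √ξ ⟨z,ζ⟩} Q_{E_jj}^n(ζ) dσ(ζ)` (entrywise integral). -/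
def Phi (n : ℕ) (ξ : ℝ) (j : Fin (n+1)) (z : C2) : MatN n :=
  Matrix.of fun a b =>
    (n + 1 : ℂ) * ∫ ζ : Metric.sphere (0 : C2) 1,
      Complex.exp (-Complex.I * ((Real.sqrt ξ * pairing z ζ : ℝ) : ℂ)) *
        Q n (Matrix.single j j 1) n (ζ : C2) a b ∂sigmaS

/-- Iterated Laplacian. -/
def laplIter {W : Type*} [NormedAddCommGroup W] [NormedSpace ℝ W] (q : ℕ) (f : C2 → W) :
    C2 → W := (fun g => lapl g)^[q] f

/-- The Schwartz norm `‖F‖_{(M)} = max_{0≤q≤M} ‖(1+|z|²)^M Δ^q F‖_{L²(ℂ²)}` for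
`End(V_n)`-valued functions (`End(V_n)` carrying the Hilbert–Schmidt norm). -/
def FNorm (n M : ℕ) (F : C2 → MatN n) : ℝ :=
  (Finset.range (M + 1)).sup' Finset.nonempty_range_add_one fun q =>
    Real.sqrt (∫ z : C2, (1 + ‖z‖ ^ 2) ^ (2 * M) * ‖laplIter q F z‖ ^ 2)

/-- The Laplacian on `ℝ²`. -/
def laplR2 (g : ℝ × ℝ → ℂ) (x : ℝ × ℝ) : ℂ :=
  iteratedDeriv 2 (fun t : ℝ => g (x.1 + t, x.2)) 0
    + iteratedDeriv 2 (fun t : ℝ => g (x.1, x.2 + t)) 0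

/-- The Schwartz norm `‖g‖_{(M)}` on `S(ℝ²)`. -/
def gNorm2 (M : ℕ) (g : ℝ × ℝ → ℂ) : ℝ :=
  (Finset.range (M + 1)).sup' Finset.nonempty_range_add_one fun q =>
    Real.sqrt (∫ x : ℝ × ℝ, (1 + x.1 ^ 2 + x.2 ^ 2) ^ (2 * M) * ‖(laplR2)^[q] g x‖ ^ 2)

/-- The Schwartz norm `‖g‖_{(M)}` on `S(ℝ)` (the Laplacian on `ℝ` being `(d/dx)²`). -/
def gNorm1 (M : ℕ) (g : ℝ → ℂ) : ℝ :=
  (Finset.range (M + 1)).sup' Finset.nonempty_range_add_one fun q =>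
    Real.sqrt (∫ x : ℝ, (1 + x ^ 2) ^ (2 * M) * ‖iteratedDeriv (2 * q) g x‖ ^ 2)



lemma oddfac (k : ℕ) : (∏ i ∈ Finset.range (k+1), (2*i+1)) * (2^k * k.factorial)
    = (2*k+1).factorial := by
  induction k with
  | zero => simp
  | succ k ih =>
    rw [Finset.prod_range_succ, pow_succ, Nat.factorial_succ]
    have h : (2*(k+1)+1).factorial = (2*(k+1)+1) * ((2*k+1)+1) * (2*k+1).factorial := by
      have : 2*(k+1)+1 = ((2*k+1)+1)+1 := by ring
      rw [this, Nat.factorial_succ, Nat.factorial_succ]; try ring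
    rw [h, ← ih]; ring

lemma keyInd (k : ℕ) : (2*k+3) * ((2*k+1).factorial)^2
    ≤ (2*k+2) * (2^(4*k+1) * (k.factorial)^3 * (k+1).factorial) := by
  induction k with
  | zero => simp [Nat.factorial]
  | succ k ih =>
    have h3 : (k+1+1).factorial = (k+2) * ((k+1) * k.factorial) := by
      rw [Nat.factorial_succ, Nat.factorial_succ]
    have hf : (2*(k+1)+1).factorial = (2*k+3) * ((2*k+2) * (2*k+1).factorial) := by
      have : 2*(k+1)+1 = ((2*k+1)+1)+1 := by ring
      rw [this, Nat.factorial_succ, Nat.factorial_succ]; try ring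
    rw [h3, hf]
    set F := (2*k+1).factorial with hF
    set A := 2^(4*k+1) * k.factorial^3 * (k+1).factorial with hA
    have hAexp : 2^(4*(k+1)+1) * ((k+1).factorial)^3 * ((k+2)*((k+1)*k.factorial))
        = 16*(k+1)^3*(k+2) * A := by
      rw [hA, Nat.factorial_succ]
      ring
    rw [hAexp]
    calc (2*(k+1)+3) * ((2*k+3)*((2*k+2)*F))^2
        = (2*k+5)*(2*k+3)*(2*k+2)^2 * ((2*k+3)*F^2) := by ring
      _ ≤ (2*k+5)*(2*k+3)*(2*k+2)^2 * ((2*k+2)*A) := Nat.mul_le_mul_left _ ih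
      _ = ((2*k+5)*(2*k+3)) * ((2*k+2)^3*A) := by ring
      _ ≤ ((2*k+4)^2) * ((2*k+2)^3*A) := Nat.mul_le_mul_right _ (by nlinarith)
      _ = (2*(k+1)+2) * (16*(k+1)^3*(k+2) * A) := by ring

lemma prodAbs {N j : ℕ} (hj : j ≤ N) :
    ∏ m ∈ (Finset.range (N+1)).erase j, ((j:ℤ) - m).natAbs
      = j.factorial * (N-j).factorial := by
  have hsplit : (Finset.range (N+1)).erase j = Finset.range j ∪ Finset.Ico (j+1) (N+1) := by
    ext m
    simp [Finset.mem_erase, Finset.mem_range, Finset.mem_Ico]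
    omega
  have hdisj : Disjoint (Finset.range j) (Finset.Ico (j+1) (N+1)) := by
    simp [Finset.disjoint_left, Finset.mem_range, Finset.mem_Ico]
    omega
  rw [hsplit, Finset.prod_union hdisj]
  congr 1
  · rw [← Finset.prod_range_add_one_eq_factorial j, ← Finset.prod_range_reflect]
    apply Finset.prod_congr rfl
    intro m hm
    rw [Finset.mem_range] at hm
    omega
  · rw [Finset.prod_Ico_eq_prod_range, ← Finset.prod_range_add_one_eq_factorial (N-j)]
    have : N+1 - (j+1) = N - j := by omega
    rw [this]
    apply Finset.prod_congr rfl
    intro m hm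
    rw [Finset.mem_range] at hm
    omega

lemma centerMin {n j : ℕ} (hj : j ≤ n) :
    (n/2).factorial * (n - n/2).factorial ≤ j.factorial * (n-j).factorial := by
  have h1 := Nat.choose_le_middle j n
  have h2 := Nat.choose_mul_factorial_mul_factorial hj
  have h3 := Nat.choose_mul_factorial_mul_factorial (Nat.div_le_self n 2)
  have hpos : 0 < n.choose (n/2) := Nat.choose_pos (Nat.div_le_self n 2)
  have key : n.choose (n/2) * ((n/2).factorial * (n - n/2).factorial)
      ≤ n.choose (n/2) * (j.factorial * (n-j).factorial) := by
    rw [← mul_assoc, h3]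
    calc n.factorial = n.choose j * j.factorial * (n-j).factorial := h2.symm
      _ ≤ n.choose (n/2) * j.factorial * (n-j).factorial := by
          exact Nat.mul_le_mul_right _ (Nat.mul_le_mul_right _ h1)
      _ = n.choose (n/2) * (j.factorial * (n-j).factorial) := by ring
  exact Nat.le_of_mul_le_mul_left key hpos

lemma keySubset {n j : ℕ} (hj : j ≤ n) {t : Finset ℕ} (ht : t ⊆ Finset.range (n+1)) :
    ∏ m ∈ t, ((2*m : ℤ) - n).natAbs ≤ 2^n * (j.factorial * (n-j).factorial) := by
  by_cases hz : ∃ m ∈ t, 2*m = n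
  · obtain ⟨m, hm, hm2⟩ := hz
    have : ((2*m : ℤ) - n).natAbs = 0 := by omega
    rw [Finset.prod_eq_zero hm this]
    positivity
  · push_neg at hz
    set S := (Finset.range (n+1)).filter (fun m => 2*m ≠ n) with hS
    have htS : t ⊆ S := by
      intro m hm
      rw [hS, Finset.mem_filter]
      exact ⟨ht hm, hz m hm⟩
    have step1 : ∏ m ∈ t, ((2*m : ℤ) - n).natAbs ≤ ∏ m ∈ S, ((2*m : ℤ) - n).natAbs := by
      apply Finset.prod_le_prod_of_subset_of_one_le' htS
      intro m hmS _
      rw [hS, Finset.mem_filter] at hmS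
      omega
    refine step1.trans ?_
    rcases Nat.even_or_odd n with ⟨k, hk⟩ | ⟨k, hk⟩
    · -- n = 2k
      subst hk
      have hSe : S = (Finset.range (k+k+1)).erase k := by
        ext m
        simp [hS, Finset.mem_filter, Finset.mem_erase, Finset.mem_range]
        omega
      have hprod : ∏ m ∈ S, ((2*m : ℤ) - ((k+k : ℕ) : ℤ)).natAbs
          = ∏ m ∈ (Finset.range (k+k+1)).erase k, (2 * ((k:ℤ) - m).natAbs) := by
        rw [hSe]
        apply Finset.prod_congr rfl
        intro m _
        omega
      rw [hprod, Finset.prod_mul_distrib, Finset.prod_const, prodAbs (by omega : k ≤ k+k)]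
      have hcard : ((Finset.range (k+k+1)).erase k).card = k+k := by
        rw [Finset.card_erase_of_mem (by simp), Finset.card_range]; omega
      rw [hcard]
      have hkk : k+k-k = k := by omega
      rw [hkk]
      have := centerMin (n := k+k) hj
      have hmid : (k+k)/2 = k := by omega
      rw [hmid, hkk] at this
      exact Nat.mul_le_mul_left _ this
    · -- n = 2k+1
      subst hk
      have hSe : S = Finset.range (2*k+1+1) := by
        ext m
        simp [hS, Finset.mem_filter, Finset.mem_range]
        omega
      have h2 : (2*k+1+1) = (k+1) + (k+1) := by omega
      have hprod : ∏ m ∈ S, ((2*m : ℤ) - ((2*k+1 : ℕ) : ℤ)).natAbs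
          = (∏ i ∈ Finset.range (k+1), (2*i+1))^2 := by
        rw [hSe, h2, Finset.prod_range_add, sq]
        congr 1
        · rw [← Finset.prod_range_reflect]
          apply Finset.prod_congr rfl
          intro m hm
          rw [Finset.mem_range] at hm
          omega
        · apply Finset.prod_congr rfl
          intro m hm
          rw [Finset.mem_range] at hm
          omega
      rw [hprod]
      set O := ∏ i ∈ Finset.range (k+1), (2*i+1) with hO
      -- O^2 * (2^k * k!)^2 = ((2k+1)!)^2 ≤ 2^(4k+1) k!^3 (k+1)! = (2^k k!)^2 * (2^(2k+1) k! (k+1)!)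
      have hofac : O * (2^k * k.factorial) = (2*k+1).factorial := oddfac k
      have hki : ((2*k+1).factorial)^2 ≤ 2^(4*k+1) * (k.factorial)^3 * (k+1).factorial := by
        have h := keyInd k
        have h23 : (2*k+2) * (2^(4*k+1) * (k.factorial)^3 * (k+1).factorial)
            ≤ (2*k+3) * (2^(4*k+1) * (k.factorial)^3 * (k+1).factorial) := by
          exact Nat.mul_le_mul_right _ (by omega)
        -- (2k+3) * F^2 ≤ (2k+2) * A ≤ (2k+3) * A → F^2 ≤ A
        exact Nat.le_of_mul_le_mul_left (h.trans h23) (by omega)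
      have hOsq : O^2 * (2^k * k.factorial)^2 = ((2*k+1).factorial)^2 := by
        rw [← mul_pow, hofac]
      have hA : 2^(4*k+1) * (k.factorial)^3 * (k+1).factorial
          = (2^k * k.factorial)^2 * (2^(2*k+1) * (k.factorial * (k+1).factorial)) := by
        ring
      have hfinal : O^2 ≤ 2^(2*k+1) * (k.factorial * (k+1).factorial) := by
        have hpos : 0 < (2^k * k.factorial)^2 := by positivity
        refine Nat.le_of_mul_le_mul_left ?_ hpos
        calc (2^k * k.factorial)^2 * O^2 = O^2 * (2^k * k.factorial)^2 := by ring
          _ = ((2*k+1).factorial)^2 := hOsq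
          _ ≤ 2^(4*k+1) * (k.factorial)^3 * (k+1).factorial := hki
          _ = (2^k * k.factorial)^2 * (2^(2*k+1) * (k.factorial * (k+1).factorial)) := hA
      refine hfinal.trans ?_
      have := centerMin (n := 2*k+1) hj
      have hmid : (2*k+1)/2 = k := by omega
      have hsub : 2*k+1-k = k+1 := by omega
      rw [hmid, hsub] at this
      exact Nat.mul_le_mul_left _ this

lemma finsetVieta {ι : Type*} (s : Finset ι) (f : ι → ℂ) (k : ℕ) (h : k ≤ s.card) :
    (∏ i ∈ s, (X - C (f i))).coeff k
      = (-1)^(s.card - k) * ∑ t ∈ s.powersetCard (s.card - k), ∏ i ∈ t, f i := by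
  have h1 : (∏ i ∈ s, (X - C (f i))) = ((s.val.map f).map (fun t => X - C t)).prod := by
    rw [Multiset.map_map]; rfl
  have hc : Multiset.card (s.val.map f) = s.card := by simp
  rw [h1, Multiset.prod_X_sub_C_coeff _ (by rwa [hc]), hc, Finset.esymm_map_val]

lemma normIntCast (z : ℤ) : ‖(z : ℂ)‖ = (z.natAbs : ℝ) := by
  rw [Complex.norm_intCast]; simp [Nat.cast_natAbs]

/-- the nodes -/
def vnode (n : ℕ) : Fin (n+1) → ℂ := fun j => -(n : ℂ) + 2 * ((j : ℕ) : ℂ)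

lemma vnode_injective (n : ℕ) : Function.Injective (vnode n) := by
  intro j j' h
  simp only [vnode] at h
  have : ((j : ℕ) : ℂ) = ((j' : ℕ) : ℂ) := by linear_combination h / 2
  exact Fin.ext (Nat.cast_injective this)

lemma vnode_eq_int (n : ℕ) (m : Fin (n+1)) :
    vnode n m = ((2*(m:ℕ) - n : ℤ) : ℂ) := by
  simp only [vnode]; push_cast; ring

lemma vnode_norm (n : ℕ) (m : Fin (n+1)) :
    ‖vnode n m‖ = (((2*(m:ℕ) : ℤ) - n).natAbs : ℝ) := by
  rw [vnode_eq_int, normIntCast]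

lemma vnode_sub_norm (n : ℕ) (j m : Fin (n+1)) :
    ‖vnode n j - vnode n m‖ = ((2 * (((j:ℕ):ℤ) - (m:ℕ)).natAbs : ℕ) : ℝ) := by
  have h : vnode n j - vnode n m = ((2 * (((j:ℕ):ℤ) - (m:ℕ)) : ℤ) : ℂ) := by
    simp only [vnode]; push_cast; ring
  rw [h, normIntCast]
  congr 1
  rw [Int.natAbs_mul]; rfl

lemma eraseImage (n : ℕ) (j : Fin (n+1)) :
    (Finset.univ.erase j).image Fin.val = (Finset.range (n+1)).erase (j:ℕ) := by
  ext m
  simp only [Finset.mem_image, Finset.mem_erase, Finset.mem_range, Finset.mem_univ, and_true]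
  constructor
  · rintro ⟨a, ha, rfl⟩
    exact ⟨fun h => ha (Fin.ext h), a.isLt⟩
  · rintro ⟨hm, hlt⟩
    exact ⟨⟨m, hlt⟩, fun h => hm (by simpa using congrArg Fin.val h), rfl⟩

/-- the denominator product -/
lemma denomProd (n : ℕ) (j : Fin (n+1)) :
    ∏ m ∈ Finset.univ.erase j, ‖vnode n j - vnode n m‖
      = ((2^n * ((j:ℕ).factorial * (n-(j:ℕ)).factorial) : ℕ) : ℝ) := by
  have h1 : ∏ m ∈ Finset.univ.erase j, ‖vnode n j - vnode n m‖
      = ((∏ m ∈ Finset.univ.erase j, (2 * (((j:ℕ):ℤ) - (m:ℕ)).natAbs) : ℕ) : ℝ) := by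
    push_cast
    exact Finset.prod_congr rfl fun m _ => by rw [vnode_sub_norm]; push_cast; ring
  rw [h1]
  congr 1
  have hjn : (j:ℕ) ≤ n := Nat.lt_succ_iff.mp j.isLt
  calc ∏ m ∈ Finset.univ.erase j, (2 * (((j:ℕ):ℤ) - (m:ℕ)).natAbs)
      = ∏ m ∈ (Finset.range (n+1)).erase (j:ℕ), (2 * (((j:ℕ):ℤ) - m).natAbs) := by
        rw [← eraseImage n j, Finset.prod_image (fun a _ b _ h => Fin.val_injective h)]
    _ = 2^n * ((j:ℕ).factorial * (n-(j:ℕ)).factorial) := by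
        rw [Finset.prod_mul_distrib, Finset.prod_const, prodAbs hjn,
          Finset.card_erase_of_mem (Finset.mem_range.mpr j.isLt), Finset.card_range]
        simp

example : True := trivial

lemma subsetBound (n : ℕ) (j : Fin (n+1)) {t : Finset (Fin (n+1))}
    (ht : t ⊆ Finset.univ.erase j) :
    ∏ m ∈ t, ‖vnode n m‖ ≤ ∏ m ∈ Finset.univ.erase j, ‖vnode n j - vnode n m‖ := by
  have hjn : (j:ℕ) ≤ n := Nat.lt_succ_iff.mp j.isLt
  rw [denomProd]
  have h1 : ∏ m ∈ t, ‖vnode n m‖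
      = ((∏ m ∈ t.image Fin.val, ((2*m : ℤ) - n).natAbs : ℕ) : ℝ) := by
    rw [Finset.prod_image (fun a _ b _ h => Fin.val_injective h)]
    push_cast
    exact Finset.prod_congr rfl fun m _ => by rw [vnode_norm]
  rw [h1]
  have hsub : t.image Fin.val ⊆ Finset.range (n+1) := by
    intro m hm
    simp only [Finset.mem_image] at hm
    obtain ⟨a, _, rfl⟩ := hm
    exact Finset.mem_range.mpr a.isLt
  exact_mod_cast keySubset hjn hsub

lemma basisBound (n : ℕ) (j : Fin (n+1)) (q : ℕ) (hq : q ≤ n) :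
    ‖(Lagrange.basis Finset.univ (vnode n) j).coeff q‖ ≤ (n.choose q : ℝ) := by
  have hcard : (Finset.univ.erase j).card = n := by
    rw [Finset.card_erase_of_mem (Finset.mem_univ j), Finset.card_univ, Fintype.card_fin]
    omega
  have hne : ∀ m ∈ Finset.univ.erase j, vnode n j - vnode n m ≠ 0 := by
    intro m hm
    rw [sub_ne_zero]
    exact fun h => (Finset.mem_erase.mp hm).1 (vnode_injective n h.symm)
  have hbasis : Lagrange.basis Finset.univ (vnode n) j
      = C (∏ m ∈ Finset.univ.erase j, (vnode n j - vnode n m)⁻¹)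
        * ∏ m ∈ Finset.univ.erase j, (X - C (vnode n m)) := by
    rw [Lagrange.basis]
    simp only [Lagrange.basisDivisor]
    rw [Finset.prod_mul_distrib, map_prod]
  rw [hbasis, coeff_C_mul, norm_mul]
  rw [finsetVieta _ _ q (le_of_le_of_eq hq hcard.symm), hcard]
  rw [norm_mul, norm_prod]
  have hD : ∏ m ∈ Finset.univ.erase j, ‖(vnode n j - vnode n m)⁻¹‖
      = (∏ m ∈ Finset.univ.erase j, ‖vnode n j - vnode n m‖)⁻¹ := by
    rw [← Finset.prod_inv_distrib]
    exact Finset.prod_congr rfl fun m _ => norm_inv _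
  rw [hD]
  have hnorm1 : ‖((-1 : ℂ))^(n-q)‖ = 1 := by
    rw [norm_pow, norm_neg, norm_one, one_pow]
  rw [hnorm1, one_mul]
  set P := ∏ m ∈ Finset.univ.erase j, ‖vnode n j - vnode n m‖ with hP
  have hPpos : 0 < P := Finset.prod_pos fun m hm => norm_pos_iff.mpr (hne m hm)
  have hsum : ‖∑ t ∈ (Finset.univ.erase j).powersetCard (n-q), ∏ i ∈ t, vnode n i‖
      ≤ (n.choose q : ℝ) * P := by
    calc ‖∑ t ∈ (Finset.univ.erase j).powersetCard (n-q), ∏ i ∈ t, vnode n i‖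
        ≤ ∑ t ∈ (Finset.univ.erase j).powersetCard (n-q), ‖∏ i ∈ t, vnode n i‖ :=
          norm_sum_le _ _
      _ ≤ ∑ _t ∈ (Finset.univ.erase j).powersetCard (n-q), P := by
          apply Finset.sum_le_sum
          intro t htmem
          rw [norm_prod]
          exact subsetBound n j (Finset.mem_powersetCard.mp htmem).1
      _ = ((Finset.univ.erase j).powersetCard (n-q)).card * P := by
          rw [Finset.sum_const, nsmul_eq_mul]
      _ = (n.choose q : ℝ) * P := by
          rw [Finset.card_powersetCard, hcard, Nat.choose_symm hq]
  calc P⁻¹ * ‖∑ t ∈ (Finset.univ.erase j).powersetCard (n-q), ∏ i ∈ t, vnode n i‖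
      ≤ P⁻¹ * ((n.choose q : ℝ) * P) := by
        apply mul_le_mul_of_nonneg_left hsum (inv_nonneg.mpr hPpos.le)
    _ = (n.choose q : ℝ) := by field_simp


/-- The Vandermonde system with equispaced nodes `t_j = −n+2j` has a unique
solution, whose entries satisfy `|a_q| ≤ (n+1)·C(n,q)·max_j |c_j|`. -/
theorem statement_14 (n : ℕ) (c : Fin (n+1) → ℂ) :
    ∃ a : Fin (n+1) → ℂ,
      (∀ j : Fin (n+1),
        ∑ q : Fin (n+1), a q * (-(n : ℂ) + 2 * ((j : ℕ) : ℂ)) ^ (q : ℕ) = c j) ∧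
      (∀ a' : Fin (n+1) → ℂ,
        (∀ j : Fin (n+1),
          ∑ q : Fin (n+1), a' q * (-(n : ℂ) + 2 * ((j : ℕ) : ℂ)) ^ (q : ℕ) = c j) →
        a' = a) ∧
      ∀ q : Fin (n+1), ‖a q‖ ≤ ((n : ℝ) + 1) * (n.choose (q : ℕ) : ℝ) *
        (Finset.univ.sup' Finset.univ_nonempty fun j : Fin (n+1) => ‖c j‖) := by
  have hinj : Set.InjOn (vnode n) (Finset.univ : Finset (Fin (n+1))) :=
    fun a _ b _ h => vnode_injective n h
  set p := Lagrange.interpolate Finset.univ (vnode n) c with hp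
  have hcard : ((Finset.univ : Finset (Fin (n+1))).card : ℕ) = n+1 := by
    rw [Finset.card_univ, Fintype.card_fin]
  have hdeg : p.degree < ((n+1 : ℕ) : WithBot ℕ) := by
    have := Lagrange.degree_interpolate_lt (s := Finset.univ) c hinj
    rwa [hcard] at this
  have hnat : p.natDegree < n+1 := by
    rcases eq_or_ne p 0 with h | h
    · simp [h]
    · exact (Polynomial.natDegree_lt_iff_degree_lt h).mpr hdeg
  have hnode : ∀ j : Fin (n+1), (-(n : ℂ) + 2 * ((j : ℕ) : ℂ)) = vnode n j := fun _ => rfl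
  refine ⟨fun q => p.coeff (q:ℕ), ?_, ?_, ?_⟩
  · intro j
    rw [hnode j, Fin.sum_univ_eq_sum_range (fun i => p.coeff i * (vnode n j)^i) (n+1),
      ← Polynomial.eval_eq_sum_range' hnat]
    exact Lagrange.eval_interpolate_at_node c hinj (Finset.mem_univ j)
  · intro a' h'
    set p' : Polynomial ℂ := ∑ q : Fin (n+1), C (a' q) * X^(q:ℕ) with hp'
    have hdeg' : p'.degree < ((Finset.univ : Finset (Fin (n+1))).card : ℕ) := by
      rw [hcard]
      apply lt_of_le_of_lt (Polynomial.degree_sum_le _ _)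
      rw [Finset.sup_lt_iff (by exact_mod_cast WithBot.bot_lt_coe (n+1))]
      intro q _
      apply lt_of_le_of_lt (Polynomial.degree_C_mul_X_pow_le _ _)
      exact_mod_cast q.isLt
    have heval : ∀ j ∈ (Finset.univ : Finset (Fin (n+1))), p'.eval (vnode n j) = c j := by
      intro j _
      rw [hp', Polynomial.eval_finset_sum]
      simp only [Polynomial.eval_mul, Polynomial.eval_C, Polynomial.eval_pow,
        Polynomial.eval_X]
      rw [← h' j]
      exact Finset.sum_congr rfl fun q _ => by rw [hnode j]
    have hpp : p' = p := Lagrange.eq_interpolate_of_eval_eq c hinj hdeg' heval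
    funext q
    have : p'.coeff (q:ℕ) = a' q := by
      rw [hp', Polynomial.finset_sum_coeff]
      simp only [Polynomial.coeff_C_mul, Polynomial.coeff_X_pow]
      rw [Finset.sum_eq_single q]
      · simp
      · intro r _ hrq
        have h2 : (q:ℕ) ≠ (r:ℕ) := fun h => hrq (Fin.ext h.symm)
        simp [h2]
      · intro h
        exact absurd (Finset.mem_univ q) h
    rw [← this, hpp]
  · intro q
    have hq : (q:ℕ) ≤ n := Nat.lt_succ_iff.mp q.isLt
    set M := Finset.univ.sup' Finset.univ_nonempty fun j : Fin (n+1) => ‖c j‖ with hM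
    have hMle : ∀ j : Fin (n+1), ‖c j‖ ≤ M := fun j =>
      Finset.le_sup' (f := fun j : Fin (n+1) => ‖c j‖) (Finset.mem_univ j)
    have hM0 : 0 ≤ M := le_trans (norm_nonneg (c 0)) (hMle 0)
    have hcoeff : p.coeff (q:ℕ)
        = ∑ j : Fin (n+1), c j * (Lagrange.basis Finset.univ (vnode n) j).coeff (q:ℕ) := by
      rw [hp, Lagrange.interpolate_apply, Polynomial.finset_sum_coeff]
      exact Finset.sum_congr rfl fun j _ => by rw [Polynomial.coeff_C_mul]
    show ‖p.coeff (q:ℕ)‖ ≤ ((n:ℝ)+1) * (n.choose (q:ℕ) : ℝ) * M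
    rw [hcoeff]
    calc ‖∑ j : Fin (n+1), c j * (Lagrange.basis Finset.univ (vnode n) j).coeff (q:ℕ)‖
        ≤ ∑ j : Fin (n+1), ‖c j * (Lagrange.basis Finset.univ (vnode n) j).coeff (q:ℕ)‖ :=
          norm_sum_le _ _
      _ ≤ ∑ _j : Fin (n+1), M * (n.choose (q:ℕ) : ℝ) := by
          apply Finset.sum_le_sum
          intro j _
          rw [norm_mul]
          exact mul_le_mul (hMle j) (basisBound n j (q:ℕ) hq) (norm_nonneg _) hM0
      _ = ((n:ℝ)+1) * (n.choose (q:ℕ) : ℝ) * M := by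
          rw [Finset.sum_const, Finset.card_univ, Fintype.card_fin, nsmul_eq_mul]
          push_cast
          ring
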